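/- Let f(x) = p(x^{a_1},...,x^{a_m}) where p is a real polynomial in m variables and a_1,...,a_m in R^2. Then the cubic-in-derivatives expression ∂₁²f·(∂₂f)² − 2∂₁∂₂f·∂₁f·∂₂f + ∂₂²f·(∂₁f)² equals, up to multiplication by a monomial in (x_1,x_2), a polynomial q(x^{a_1},...,x^{a_m}) where q has Newton polytope contained in 3·Newt(p). -/

import Mathlib

open scoped Pointwise

/-- `F13 p a x y = p(x^{a₁}, …, x^{a_m})` for exponent vectors `aₖ ∈ ℝ²`. -/
noncomputable def F13 {m : ℕ} (p : MvPolynomial (Fin m) ℝ) (a : Fin m → Fin 2 → ℝ)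
    (x y : ℝ) : ℝ :=
  MvPolynomial.eval (fun k => x ^ a k 0 * y ^ a k 1) p

/-- The (real points of the) Newton polytope of a polynomial in `m` variables. -/
def NewtMv {m : ℕ} (p : MvPolynomial (Fin m) ℝ) : Set (Fin m → ℝ) :=
  convexHull ℝ {v : Fin m → ℝ | ∃ d ∈ p.support, v = fun k => (d k : ℝ)}

namespace Stmt13Aux

variable {m : ℕ}

/-- The weighted degree `∑ k, d k * a k i`. -/
noncomputable def E (a : Fin m → Fin 2 → ℝ) (i : Fin 2) (d : Fin m →₀ ℕ) : ℝ :=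
  ∑ k, (d k : ℝ) * a k i

/-- A generic "generalized polynomial" supported on `p.support` with coefficient
function `c` and exponent shifts `s`, `t`. -/
noncomputable def G (p : MvPolynomial (Fin m) ℝ) (a : Fin m → Fin 2 → ℝ)
    (c : (Fin m →₀ ℕ) → ℝ) (s t x y : ℝ) : ℝ :=
  ∑ d ∈ p.support, c d * x ^ (E a 0 d - s) * y ^ (E a 1 d - t)

/-- The polynomial with coefficient `c d` on each `d ∈ p.support`. -/
noncomputable def Pc (p : MvPolynomial (Fin m) ℝ) (c : (Fin m →₀ ℕ) → ℝ) :
    MvPolynomial (Fin m) ℝ :=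
  ∑ d ∈ p.support, MvPolynomial.monomial d (c d)

theorem support_Pc (p : MvPolynomial (Fin m) ℝ) (c : (Fin m →₀ ℕ) → ℝ) :
    (Pc p c).support ⊆ p.support := by
  classical
  refine (MvPolynomial.support_sum).trans ?_
  intro d hd
  simp only [Finset.mem_biUnion] at hd
  obtain ⟨e, he, hd⟩ := hd
  rcases Finset.mem_of_subset MvPolynomial.support_monomial_subset hd with h
  simp only [Finset.mem_singleton] at h
  exact h ▸ he

theorem prod_pow_eq {x y : ℝ} (hx : 0 < x) (hy : 0 < y) (a : Fin m → Fin 2 → ℝ)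
    (d : Fin m →₀ ℕ) :
    (∏ k, (x ^ a k 0 * y ^ a k 1) ^ d k) = x ^ E a 0 d * y ^ E a 1 d := by
  have key : ∀ i : Fin 2, ∀ z : ℝ, 0 < z →
      (∏ k, (z ^ a k i) ^ d k) = z ^ E a i d := by
    intro i z hz
    rw [E, Real.rpow_sum_of_pos hz]
    refine Finset.prod_congr rfl fun k _ => ?_
    rw [← Real.rpow_natCast (z ^ a k i) (d k), ← Real.rpow_mul hz.le, mul_comm]
  calc (∏ k, (x ^ a k 0 * y ^ a k 1) ^ d k)
      = (∏ k, (x ^ a k 0) ^ d k) * ∏ k, (y ^ a k 1) ^ d k := by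
        rw [← Finset.prod_mul_distrib]; exact Finset.prod_congr rfl fun k _ => mul_pow _ _ _
    _ = x ^ E a 0 d * y ^ E a 1 d := by rw [key 0 x hx, key 1 y hy]

theorem G_eq_eval (p : MvPolynomial (Fin m) ℝ) (a : Fin m → Fin 2 → ℝ)
    (c : (Fin m →₀ ℕ) → ℝ) (s t : ℝ) {x y : ℝ} (hx : 0 < x) (hy : 0 < y) :
    G p a c s t x y =
      x ^ (-s) * y ^ (-t) *
        MvPolynomial.eval (fun k => x ^ a k 0 * y ^ a k 1) (Pc p c) := by
  rw [Pc, map_sum, G, Finset.mul_sum]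
  refine Finset.sum_congr rfl fun d _ => ?_
  rw [MvPolynomial.eval_monomial, Finsupp.prod_pow, prod_pow_eq hx hy,
    sub_eq_add_neg, sub_eq_add_neg, Real.rpow_add hx, Real.rpow_add hy]
  ring

theorem F13_eq_G (p : MvPolynomial (Fin m) ℝ) (a : Fin m → Fin 2 → ℝ)
    {x y : ℝ} (hx : 0 < x) (hy : 0 < y) :
    F13 p a x y = G p a (fun d => p.coeff d) 0 0 x y := by
  rw [F13, MvPolynomial.eval_eq', G]
  refine Finset.sum_congr rfl fun d _ => ?_
  rw [sub_zero, sub_zero, prod_pow_eq hx hy]; ring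

theorem hasDerivAt_G_x (p : MvPolynomial (Fin m) ℝ) (a : Fin m → Fin 2 → ℝ)
    (c : (Fin m →₀ ℕ) → ℝ) (s t : ℝ) {x : ℝ} (y : ℝ) (hx : 0 < x) :
    HasDerivAt (fun x' => G p a c s t x' y)
      (G p a (fun d => (E a 0 d - s) * c d) (s + 1) t x y) x := by
  unfold G
  refine HasDerivAt.fun_sum fun d _ => ?_
  have h := ((Real.hasDerivAt_rpow_const (x := x) (p := E a 0 d - s)
      (Or.inl hx.ne')).const_mul (c d)).mul_const (y ^ (E a 1 d - t))
  refine h.congr_deriv ?_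
  rw [show E a 0 d - (s + 1) = E a 0 d - s - 1 by ring]
  ring

theorem hasDerivAt_G_y (p : MvPolynomial (Fin m) ℝ) (a : Fin m → Fin 2 → ℝ)
    (c : (Fin m →₀ ℕ) → ℝ) (s t : ℝ) (x : ℝ) {y : ℝ} (hy : 0 < y) :
    HasDerivAt (fun y' => G p a c s t x y')
      (G p a (fun d => (E a 1 d - t) * c d) s (t + 1) x y) y := by
  unfold G
  refine HasDerivAt.fun_sum fun d _ => ?_
  have h := (Real.hasDerivAt_rpow_const (x := y) (p := E a 1 d - t)
      (Or.inl hy.ne')).const_mul (c d * x ^ (E a 0 d - s))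
  refine h.congr_deriv ?_
  rw [show E a 1 d - (t + 1) = E a 1 d - t - 1 by ring]
  ring

theorem deriv_F13_x (p : MvPolynomial (Fin m) ℝ) (a : Fin m → Fin 2 → ℝ)
    {x y : ℝ} (hx : 0 < x) (hy : 0 < y) :
    deriv (fun x' => F13 p a x' y) x =
      G p a (fun d => (E a 0 d - 0) * p.coeff d) (0 + 1) 0 x y := by
  have hev : (fun x' => F13 p a x' y) =ᶠ[nhds x]
      (fun x' => G p a (fun d => p.coeff d) 0 0 x' y) := by
    filter_upwards [Ioi_mem_nhds hx] with x' hx' using F13_eq_G p a hx' hy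
  rw [hev.deriv_eq, (hasDerivAt_G_x p a _ 0 0 y hx).deriv]

theorem deriv_F13_y (p : MvPolynomial (Fin m) ℝ) (a : Fin m → Fin 2 → ℝ)
    {x y : ℝ} (hx : 0 < x) (hy : 0 < y) :
    deriv (fun y' => F13 p a x y') y =
      G p a (fun d => (E a 1 d - 0) * p.coeff d) 0 (0 + 1) x y := by
  have hev : (fun y' => F13 p a x y') =ᶠ[nhds y]
      (fun y' => G p a (fun d => p.coeff d) 0 0 x y') := by
    filter_upwards [Ioi_mem_nhds hy] with y' hy' using F13_eq_G p a hx hy'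
  rw [hev.deriv_eq, (hasDerivAt_G_y p a _ 0 0 x hy).deriv]

end Stmt13Aux

/-- For `f(x) = p(x^{a₁},…,x^{a_m})`, the expression
`∂₁²f·(∂₂f)² − 2 ∂₁∂₂f·∂₁f·∂₂f + ∂₂²f·(∂₁f)²` equals, up to a monomial factor in
`(x₁,x₂)`, a polynomial `q(x^{a₁},…,x^{a_m})` with `Newt(q) ⊆ 3·Newt(p)`. -/
theorem stmt_13 (m : ℕ) (p : MvPolynomial (Fin m) ℝ) (a : Fin m → Fin 2 → ℝ) :
    ∃ (q : MvPolynomial (Fin m) ℝ) (w : Fin 2 → ℝ),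
      NewtMv q ⊆ (3 : ℝ) • NewtMv p ∧
      ∀ x y : ℝ, 0 < x → 0 < y →
        deriv (fun x' => deriv (fun x'' => F13 p a x'' y) x') x *
            (deriv (fun y' => F13 p a x y') y) ^ 2
          - 2 * deriv (fun x' => deriv (fun y' => F13 p a x' y') y) x *
              deriv (fun x' => F13 p a x' y) x * deriv (fun y' => F13 p a x y') y
          + deriv (fun y' => deriv (fun y'' => F13 p a x y'') y') y *
              (deriv (fun x' => F13 p a x' y) x) ^ 2 =
        x ^ w 0 * y ^ w 1 * MvPolynomial.eval (fun k => x ^ a k 0 * y ^ a k 1) q := by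
  classical
  open Stmt13Aux in
  -- coefficient functions for the various derivatives
  set c0 : (Fin m →₀ ℕ) → ℝ := fun d => p.coeff d with hc0
  set c1 : (Fin m →₀ ℕ) → ℝ := fun d => (E a 0 d - 0) * c0 d with hc1  -- ∂x
  set c2 : (Fin m →₀ ℕ) → ℝ := fun d => (E a 1 d - 0) * c0 d with hc2  -- ∂y
  set c11 : (Fin m →₀ ℕ) → ℝ := fun d => (E a 0 d - (0 + 1)) * c1 d with hc11  -- ∂xx
  set c12 : (Fin m →₀ ℕ) → ℝ := fun d => (E a 0 d - 0) * c2 d with hc12  -- ∂x∂y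
  set c22 : (Fin m →₀ ℕ) → ℝ := fun d => (E a 1 d - (0 + 1)) * c2 d with hc22  -- ∂yy
  set Q1 := Pc p c11 with hQ1
  set Q2 := Pc p c2 with hQ2
  set Q3 := Pc p c12 with hQ3
  set Q4 := Pc p c1 with hQ4
  set Q5 := Pc p c22 with hQ5
  refine ⟨Q1 * Q2 * Q2 - (2 : ℝ) • (Q3 * Q4 * Q2) + Q5 * Q4 * Q4, fun _ => (-2 : ℝ),
    ?_, ?_⟩
  · -- Newton polytope containment
    have hconv : Convex ℝ ((3 : ℝ) • NewtMv p) :=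
      (convex_convexHull ℝ _).smul _
    refine convexHull_min ?_ hconv
    rintro v ⟨d, hd, rfl⟩
    -- d is a sum of three elements of p.support
    have hsupp : ∀ (c : (Fin m →₀ ℕ) → ℝ), (Pc p c).support ⊆ p.support :=
      fun c => support_Pc p c
    have htriple : ∀ A B C : MvPolynomial (Fin m) ℝ,
        A.support ⊆ p.support → B.support ⊆ p.support → C.support ⊆ p.support →
        ∀ e ∈ (A * B * C).support,
        ∃ d1 ∈ p.support, ∃ d2 ∈ p.support, ∃ d3 ∈ p.support, e = d1 + d2 + d3 := by
      intro A B C hA hB hC e he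
      have h1 := MvPolynomial.support_mul (A * B) C he
      rw [Finset.mem_add] at h1
      obtain ⟨u, hu, w, hw, rfl⟩ := h1
      have h2 := MvPolynomial.support_mul A B hu
      rw [Finset.mem_add] at h2
      obtain ⟨u1, hu1, u2, hu2, rfl⟩ := h2
      exact ⟨u1, hA hu1, u2, hB hu2, w, hC hw, rfl⟩
    have hd' : ∃ d1 ∈ p.support, ∃ d2 ∈ p.support, ∃ d3 ∈ p.support,
        d = d1 + d2 + d3 := by
      rcases Finset.mem_union.1 (MvPolynomial.support_add hd) with h' | h'
      · rw [sub_eq_add_neg] at h'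
        rcases Finset.mem_union.1 (MvPolynomial.support_add h') with h'' | h''
        · exact htriple Q1 Q2 Q2 (hsupp _) (hsupp _) (hsupp _) d h''
        · rw [MvPolynomial.support_neg] at h''
          have h3 := MvPolynomial.support_smul h''
          exact htriple Q3 Q4 Q2 (hsupp _) (hsupp _) (hsupp _) d h3
      · exact htriple Q5 Q4 Q4 (hsupp _) (hsupp _) (hsupp _) d h'
    obtain ⟨d1, h1, d2, h2, d3, h3, rfl⟩ := hd'
    have hmem : ∀ e ∈ p.support, (fun k => ((e : Fin m →₀ ℕ) k : ℝ)) ∈ NewtMv p :=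
      fun e he => subset_convexHull ℝ _ ⟨e, he, rfl⟩
    have h3eq : (3 : ℝ) • NewtMv p = NewtMv p + NewtMv p + NewtMv p := by
      have hC : Convex ℝ (NewtMv p) := convex_convexHull ℝ _
      have e1 : ((1 : ℝ) + 1) • NewtMv p = (1:ℝ) • NewtMv p + (1:ℝ) • NewtMv p :=
        hC.add_smul zero_le_one zero_le_one
      have e2 : ((2 : ℝ) + 1) • NewtMv p = (2:ℝ) • NewtMv p + (1:ℝ) • NewtMv p :=
        hC.add_smul (by norm_num) zero_le_one
      have e3 : ((2:ℝ)) • NewtMv p = (1:ℝ) • NewtMv p + (1:ℝ) • NewtMv p := by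
        rw [← e1]; norm_num
      rw [show (3:ℝ) = 2 + 1 by norm_num, e2, e3, one_smul]
    rw [h3eq]
    have : (fun k => (((d1 + d2 + d3 : Fin m →₀ ℕ)) k : ℝ)) =
        (fun k => ((d1 : Fin m →₀ ℕ) k : ℝ)) + (fun k => ((d2 : Fin m →₀ ℕ) k : ℝ))
          + (fun k => ((d3 : Fin m →₀ ℕ) k : ℝ)) := by
      funext k; simp
    rw [this]
    exact Set.add_mem_add (Set.add_mem_add (hmem d1 h1) (hmem d2 h2)) (hmem d3 h3)
  · intro x y hx hy
    -- compute all the derivatives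
    have hdx : ∀ x' : ℝ, 0 < x' → deriv (fun x'' => F13 p a x'' y) x' =
        G p a c1 (0 + 1) 0 x' y := fun x' hx' => deriv_F13_x p a hx' hy
    have hdy : ∀ y' : ℝ, 0 < y' → deriv (fun y'' => F13 p a x y'') y' =
        G p a c2 0 (0 + 1) x y' := fun y' hy' => deriv_F13_y p a hx hy'
    have hdy' : ∀ x' : ℝ, 0 < x' → deriv (fun y' => F13 p a x' y') y =
        G p a c2 0 (0 + 1) x' y := fun x' hx' => deriv_F13_y p a hx' hy
    have hdxx : deriv (fun x' => deriv (fun x'' => F13 p a x'' y) x') x =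
        G p a c11 (0 + 1 + 1) 0 x y := by
      have hev : (fun x' => deriv (fun x'' => F13 p a x'' y) x') =ᶠ[nhds x]
          (fun x' => G p a c1 (0 + 1) 0 x' y) := by
        filter_upwards [Ioi_mem_nhds hx] with x' hx' using hdx x' hx'
      rw [hev.deriv_eq, (hasDerivAt_G_x p a c1 (0 + 1) 0 y hx).deriv]
    have hdxy : deriv (fun x' => deriv (fun y' => F13 p a x' y') y) x =
        G p a c12 (0 + 1) (0 + 1) x y := by
      have hev : (fun x' => deriv (fun y' => F13 p a x' y') y) =ᶠ[nhds x]
          (fun x' => G p a c2 0 (0 + 1) x' y) := by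
        filter_upwards [Ioi_mem_nhds hx] with x' hx' using hdy' x' hx'
      rw [hev.deriv_eq, (hasDerivAt_G_x p a c2 0 (0 + 1) y hx).deriv]
    have hdyy : deriv (fun y' => deriv (fun y'' => F13 p a x y'') y') y =
        G p a c22 0 (0 + 1 + 1) x y := by
      have hev : (fun y' => deriv (fun y'' => F13 p a x y'') y') =ᶠ[nhds y]
          (fun y' => G p a c2 0 (0 + 1) x y') := by
        filter_upwards [Ioi_mem_nhds hy] with y' hy' using hdy y' hy'
      rw [hev.deriv_eq, (hasDerivAt_G_y p a c2 0 (0 + 1) x hy).deriv]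
    rw [hdxx, hdxy, hdyy, hdx x hx, hdy y hy,
      G_eq_eval p a c11 _ _ hx hy, G_eq_eval p a c12 _ _ hx hy,
      G_eq_eval p a c22 _ _ hx hy, G_eq_eval p a c1 _ _ hx hy,
      G_eq_eval p a c2 _ _ hx hy]
    rw [← hQ1, ← hQ2, ← hQ3, ← hQ4, ← hQ5]
    set v := fun k => x ^ a k 0 * y ^ a k 1 with hv
    have h2 : ((2:ℝ) • (Q3 * Q4 * Q2)) = MvPolynomial.C (2:ℝ) * (Q3 * Q4 * Q2) := by
      rw [MvPolynomial.smul_eq_C_mul]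
    rw [map_add, map_sub, h2, map_mul, map_mul, map_mul, map_mul, map_mul,
      MvPolynomial.eval_C]
    -- now pure real arithmetic with rpow
    have e0 : (-(0:ℝ)) = 0 := neg_zero
    have hxne : x ≠ 0 := hx.ne'
    have hyne : y ≠ 0 := hy.ne'
    have hx1 : x ^ (-(0 + 1) : ℝ) = x⁻¹ := by norm_num [Real.rpow_neg_one]
    have hy1 : y ^ (-(0 + 1) : ℝ) = y⁻¹ := by norm_num [Real.rpow_neg_one]
    have hx2 : x ^ (-(0 + 1 + 1) : ℝ) = (x * x)⁻¹ := by
      have : (-(0 + 1 + 1) : ℝ) = (-1) + (-1) := by norm_num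
      rw [this, Real.rpow_add hx, Real.rpow_neg_one, mul_inv]
    have hy2 : y ^ (-(0 + 1 + 1) : ℝ) = (y * y)⁻¹ := by
      have : (-(0 + 1 + 1) : ℝ) = (-1) + (-1) := by norm_num
      rw [this, Real.rpow_add hy, Real.rpow_neg_one, mul_inv]
    have hw2x : x ^ (-2 : ℝ) = (x * x)⁻¹ := by
      have : (-2 : ℝ) = (-1) + (-1) := by norm_num
      rw [this, Real.rpow_add hx, Real.rpow_neg_one, mul_inv]
    have hw2y : y ^ (-2 : ℝ) = (y * y)⁻¹ := by
      have : (-2 : ℝ) = (-1) + (-1) := by norm_num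
      rw [this, Real.rpow_add hy, Real.rpow_neg_one, mul_inv]
    rw [e0, Real.rpow_zero, hx1, hy1, hx2, hy2, hw2x, hw2y]
    simp only [Real.rpow_zero, map_mul, map_pow]
    field_simp
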